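/- Let B = R ⊕ Ri ⊕ Rj ⊕ Rk be the free exceptional ring with multiplication i² = ui, j² = vj, k² = wk, jk = vk, kj = wj, ki = wi, ik = uk, ij = uj, ji = vi for u,v,w ∈ R. Then B is an associative R-algebra, and the map sending x ∈ M = Ri⊕Rj⊕Rk to t(x) − x (where t(xi+yj+zk) = ux+vy+wz) extends to a standard involution on B. -/
import Mathlib


/-- Multiplication on `R⁴` with basis `1, i, j, k` given by the exceptional table
`i² = ui`, `j² = vj`, `k² = wk`, `jk = vk`, `kj = wj`, `ki = wi`, `ik = uk`, `ij = uj`,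
`ji = vi`; i.e. `xy = t(x)·y` for `x, y ∈ M = Ri ⊕ Rj ⊕ Rk` where `t(xi+yj+zk) = ux+vy+wz`. -/
def eMul {R : Type*} [CommRing R] (u v w : R) (x y : Fin 4 → R) : Fin 4 → R :=
  ![x 0 * y 0,
    x 0 * y 1 + x 1 * y 0 + (u * x 1 + v * x 2 + w * x 3) * y 1,
    x 0 * y 2 + x 2 * y 0 + (u * x 1 + v * x 2 + w * x 3) * y 2,
    x 0 * y 3 + x 3 * y 0 + (u * x 1 + v * x 2 + w * x 3) * y 3]

/-- The conjugation map `r + x ↦ r + t(x) − x` on the free exceptional ring. -/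
def eConj {R : Type*} [CommRing R] (u v w : R) (x : Fin 4 → R) : Fin 4 → R :=
  ![x 0 + u * x 1 + v * x 2 + w * x 3, -x 1, -x 2, -x 3]

/-- The free exceptional ring `B = R ⊕ Ri ⊕ Rj ⊕ Rk` is an associative unital `R`-algebra,
and `x ↦ t(x) − x` on `M = Ri⊕Rj⊕Rk` extends to a standard involution on `B`. -/
theorem stmt_11 {R : Type*} [CommRing R] (u v w : R) :
    (∀ x y z : Fin 4 → R, eMul u v w (eMul u v w x y) z = eMul u v w x (eMul u v w y z)) ∧
    (∀ x : Fin 4 → R, eMul u v w ![1, 0, 0, 0] x = x) ∧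
    (∀ x : Fin 4 → R, eMul u v w x ![1, 0, 0, 0] = x) ∧
    (∀ x y z : Fin 4 → R, eMul u v w (x + y) z = eMul u v w x z + eMul u v w y z) ∧
    (∀ x y z : Fin 4 → R, eMul u v w x (y + z) = eMul u v w x y + eMul u v w x z) ∧
    (∀ (r : R) (x y : Fin 4 → R), eMul u v w (r • x) y = r • eMul u v w x y) ∧
    (∀ (r : R) (x y : Fin 4 → R), eMul u v w x (r • y) = r • eMul u v w x y) ∧
    -- `eConj` is a standard involution:
    (∀ x y : Fin 4 → R, eConj u v w (x + y) = eConj u v w x + eConj u v w y) ∧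
    (∀ (r : R) (x : Fin 4 → R), eConj u v w (r • x) = r • eConj u v w x) ∧
    eConj u v w ![1, 0, 0, 0] = ![1, 0, 0, 0] ∧
    (∀ x y : Fin 4 → R, eConj u v w (eMul u v w x y)
        = eMul u v w (eConj u v w y) (eConj u v w x)) ∧
    (∀ x : Fin 4 → R, eConj u v w (eConj u v w x) = x) ∧
    (∀ x : Fin 4 → R, ∃ r : R, eMul u v w x (eConj u v w x) = ![r, 0, 0, 0]) := by
  refine ⟨?_, ?_, ?_, ?_, ?_, ?_, ?_, ?_, ?_, ?_, ?_, ?_, ?_⟩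
  · intro x y z; funext i; fin_cases i <;> simp [eMul] <;> ring
  · intro x; funext i; fin_cases i <;> simp [eMul]
  · intro x; funext i; fin_cases i <;> simp [eMul]
  · intro x y z; funext i; fin_cases i <;> simp [eMul] <;> ring
  · intro x y z; funext i; fin_cases i <;> simp [eMul] <;> ring
  · intro r x y; funext i; fin_cases i <;> simp [eMul, mul_comm, mul_assoc, mul_left_comm] <;> ring
  · intro r x y; funext i; fin_cases i <;> simp [eMul, mul_comm, mul_assoc, mul_left_comm] <;> ring
  · intro x y; funext i; fin_cases i <;> simp [eConj] <;> ring
  · intro r x; funext i; fin_cases i <;> simp [eConj, mul_comm, mul_assoc, mul_left_comm] <;> ring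
  · funext i; fin_cases i <;> simp [eConj]
  · intro x y; funext i; fin_cases i <;> simp [eConj, eMul] <;> ring
  · intro x; funext i; fin_cases i <;> simp [eConj] <;> ring
  · intro x
    refine ⟨x 0 * (x 0 + u * x 1 + v * x 2 + w * x 3), ?_⟩
    funext i; fin_cases i <;> simp [eConj, eMul] <;> ring
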